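/- Let p, q ∈ R with (p, q) ≠ r·(n/√2 − m, n/√3 − l) for every r ∈ R and n, m, l ∈ Z with (n, m, l) giving a nonzero vector. Then for all (t, n) ∈ (R × Z) \ {(0,0)}, it is not the case that both pt − n/√2 ∈ Z and qt − n/√3 ∈ Z. -/

import Mathlib

/-- If `(p, q) ≠ r·(n/√2 − m, n/√3 − l)` for every real `r` and integers `(n, m, l) ≠ 0`,
then for every `(t, n) ∈ (ℝ × ℤ) \ {(0,0)}` it is not the case that both
`pt − n/√2 ∈ ℤ` and `qt − n/√3 ∈ ℤ`. -/
theorem stmt14 (p q : ℝ)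
    (h : ∀ (r : ℝ) (n m l : ℤ), ¬(n = 0 ∧ m = 0 ∧ l = 0) →
      (p, q) ≠ (r * ((n : ℝ) / Real.sqrt 2 - (m : ℝ)),
                r * ((n : ℝ) / Real.sqrt 3 - (l : ℝ)))) :
    ∀ (t : ℝ) (n : ℤ), ¬(t = 0 ∧ n = 0) →
      ¬((∃ m : ℤ, p * t - (n : ℝ) / Real.sqrt 2 = (m : ℝ)) ∧
        (∃ l : ℤ, q * t - (n : ℝ) / Real.sqrt 3 = (l : ℝ))) := by
  intro t n hnz ⟨⟨m, hm⟩, ⟨l, hl⟩⟩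
  have s2 : Real.sqrt 2 ≠ 0 := by positivity
  have s3 : Real.sqrt 3 ≠ 0 := by positivity
  rcases eq_or_ne t 0 with ht | ht
  · subst ht
    have hn : n ≠ 0 := fun hn0 => hnz ⟨rfl, hn0⟩
    have key : (n : ℝ) = (-(m : ℝ)) * Real.sqrt 2 := by
      have h2 : (n : ℝ) / Real.sqrt 2 = -(m : ℝ) := by linarith [hm]
      field_simp at h2
      linarith
    have hm0 : m ≠ 0 := by
      intro hm0
      subst hm0
      simp at key
      exact hn (by exact_mod_cast key)
    have h2 : Real.sqrt 2 = (n : ℝ) / (-m : ℤ) := by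
      rw [eq_div_iff (by push_cast; simpa using hm0)]
      push_cast
      linarith [key]
    have : Irrational (Real.sqrt 2) := irrational_sqrt_two
    rw [h2] at this
    exact this ⟨(n : ℚ) / ((-m : ℤ) : ℚ), by push_cast; norm_num⟩
  · rcases eq_or_ne ((n, m, l) : ℤ × ℤ × ℤ) (0, 0, 0) with h0 | h0
    · obtain ⟨hn0, hml⟩ := Prod.mk.injEq .. ▸ h0
      obtain ⟨hm0, hl0⟩ := Prod.mk.injEq .. ▸ hml
      subst hn0; subst hm0; subst hl0
      simp at hm hl
      have hp : p = 0 := by rcases hm with h1 | h1; exact h1; exact absurd h1 ht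
      have hq : q = 0 := by rcases hl with h1 | h1; exact h1; exact absurd h1 ht
      have := h 0 1 0 0 (by norm_num)
      apply this
      simp [hp, hq]
    · have hne : ¬(n = 0 ∧ (-m) = 0 ∧ (-l) = 0) := by
        intro ⟨a, b, c⟩
        exact h0 (by simp [a, neg_eq_zero.mp b, neg_eq_zero.mp c])
      apply h (1/t) n (-m) (-l) hne
      have hp : p = (1/t) * ((n : ℝ) / Real.sqrt 2 - ((-m : ℤ) : ℝ)) := by
        field_simp
        field_simp at hm
        push_cast
        linarith
      have hq : q = (1/t) * ((n : ℝ) / Real.sqrt 3 - ((-l : ℤ) : ℝ)) := by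
        field_simp
        field_simp at hl
        push_cast
        linarith
      exact Prod.ext hp hq
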